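/- There exist complex numbers $z_1,\dots,z_n$ and nonnegative weights $r_{ij}$ on pairs $1\le i<j\le n$ summing to $1$ such that some zero of $\sum_{i<j} r_{ij} g_{ij}(z)$ lies outside the closed convex hull of $\{z_1,\dots,z_n\}$. Concretely, for $p(z)=z^2(z-i)^2$, the polynomial $g(z)=\tfrac13\big(z^2+z(z-i)+(z-i)^2\big)$ has a zero $\tfrac{i}{2}+\tfrac{1}{2\sqrt3}$, which does not lie in the convex hull of $\{0,i\}$. -/

import Mathlib

open Polynomial Finset

noncomputable def aa : ℂ := Complex.I / 2 + 1 / (2 * (Real.sqrt 3 : ℂ))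

noncomputable def zz (m : ℕ) : ℂ := if m ≤ 1 then 0 else Complex.I

noncomputable def rr (i j : ℕ) : ℝ :=
  if (i = 0 ∧ j = 1) ∨ (i = 2 ∧ j = 3) ∨ (i = 0 ∧ j = 2) then 1/3 else 0

lemma hs2 : (Real.sqrt 3 : ℂ) ^ 2 = 3 := by norm_cast; exact Real.sq_sqrt (by norm_num)

lemma root_eq : aa ^ 2 + aa * (aa - Complex.I) + (aa - Complex.I) ^ 2 = 0 := by
  unfold aa
  field_simp
  ring_nf
  rw [Complex.I_sq, hs2]
  norm_num

lemma aa_re : aa.re = 1 / (2 * Real.sqrt 3) := by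
  unfold aa
  have h : (2 * (Real.sqrt 3 : ℂ)) = ((2 * Real.sqrt 3 : ℝ) : ℂ) := by push_cast; ring
  rw [h, show (1 : ℂ) / ((2 * Real.sqrt 3 : ℝ) : ℂ) = (((1 / (2 * Real.sqrt 3) : ℝ)) : ℂ) by push_cast; ring]
  simp
  rw [inv_eq_one_div, div_eq_div_iff (by norm_num) (by positivity)]
  rw [Real.mul_self_sqrt (by norm_num)]; ring

lemma aa_not_mem : aa ∉ convexHull ℝ ({0, Complex.I} : Set ℂ) := by
  intro h
  have hsub : convexHull ℝ ({0, Complex.I} : Set ℂ) ⊆ {z : ℂ | z.re = 0} := by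
    apply convexHull_min
    · rintro w (rfl | rfl) <;> simp
    · show Convex ℝ (Complex.reLm ⁻¹' {0})
      exact (convex_singleton (0 : ℝ)).linear_preimage Complex.reLm
  have h0 : aa.re = 0 := hsub h
  rw [aa_re] at h0
  have hp : Real.sqrt 3 > 0 := Real.sqrt_pos.mpr (by norm_num)
  have : 1 / (2 * Real.sqrt 3) > 0 := by positivity
  linarith

lemma image_zz : (((Finset.range 4).image zz : Finset ℂ) : Set ℂ) = {0, Complex.I} := by
  ext w
  simp only [Finset.coe_image, Finset.coe_range, Set.mem_image, Set.mem_Iio,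
    Set.mem_insert_iff, Set.mem_singleton_iff]
  constructor
  · rintro ⟨m, hm, rfl⟩
    by_cases h : m ≤ 1 <;> simp [zz, h]
  · rintro (rfl | rfl)
    exacts [⟨0, by norm_num, by simp [zz]⟩, ⟨2, by norm_num, by simp [zz]⟩]

lemma e01 : ((Finset.range 4).erase 0).erase 1 = {2, 3} := by decide
lemma e02 : ((Finset.range 4).erase 0).erase 2 = {1, 3} := by decide
lemma e03 : ((Finset.range 4).erase 0).erase 3 = {1, 2} := by decide
lemma e12 : ((Finset.range 4).erase 1).erase 2 = {0, 3} := by decide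
lemma e13 : ((Finset.range 4).erase 1).erase 3 = {0, 2} := by decide
lemma e23 : ((Finset.range 4).erase 2).erase 3 = {0, 1} := by decide

lemma rsum : (∑ i ∈ Finset.range 4,
    ∑ j ∈ (Finset.range 4).filter (fun j => i < j), rr i j) = 1 := by
  simp only [Finset.sum_filter, Finset.sum_range_succ, Finset.sum_range_zero, rr]
  norm_num

lemma proot : (∑ i ∈ Finset.range 4,
    ∑ j ∈ (Finset.range 4).filter (fun j => i < j),
      C ((rr i j : ℂ)) *
        ∏ m ∈ ((Finset.range 4).erase i).erase j, (X - C (zz m))).IsRoot aa := by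
  simp only [IsRoot, eval_finset_sum, Finset.sum_filter, Finset.sum_range_succ,
    Finset.sum_range_zero, e01, e02, e03, e12, e13, e23]
  norm_num [rr, zz, eval_prod, Finset.prod_insert, Finset.prod_singleton]
  linear_combination root_eq / 3

theorem convex_combination_of_gij_can_escape_convexHull :
    (∃ (n : ℕ) (z : ℕ → ℂ) (r : ℕ → ℕ → ℝ), 2 ≤ n ∧
      (∀ i j, 0 ≤ r i j) ∧
      (∑ i ∈ Finset.range n,
        ∑ j ∈ (Finset.range n).filter (fun j => i < j), r i j) = 1 ∧
      ∃ a : ℂ,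
        (∑ i ∈ Finset.range n,
          ∑ j ∈ (Finset.range n).filter (fun j => i < j),
            C ((r i j : ℂ)) *
              ∏ m ∈ ((Finset.range n).erase i).erase j, (X - C (z m))).IsRoot a ∧
        a ∉ convexHull ℝ (↑((Finset.range n).image z) : Set ℂ)) ∧
    ((C ((1 / 3 : ℂ)) *
        (X ^ 2 + X * (X - C Complex.I) + (X - C Complex.I) ^ 2)).IsRoot
        (Complex.I / 2 + 1 / (2 * Real.sqrt 3)) ∧
      (Complex.I / 2 + 1 / (2 * (Real.sqrt 3 : ℂ))) ∉
        convexHull ℝ ({0, Complex.I} : Set ℂ)) := by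
  refine ⟨⟨4, zz, rr, by norm_num, ?_, rsum, aa, proot, ?_⟩, ?_, aa_not_mem⟩
  · intro i j
    unfold rr
    split <;> norm_num
  · rw [image_zz]; exact aa_not_mem
  · show eval aa _ = 0
    simp only [eval_mul, eval_add, eval_pow, eval_sub, eval_C, eval_X]
    linear_combination root_eq / 3
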